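/- arXiv:1702.03292 — 2 statements merged into one kernel-verified Lean document; each statement's English description precedes it below -/
import Mathlib

section
/- Let I be a homogeneous ideal in P = K[x_1,…,x_n], where K is a field of characteristic 0. Then for all i ∈ {1,…,n} and all d ∈ ℕ, the sectional matrix satisfies M_{P/I}(i, d+1) ≤ Σ_{j=1}^{i} M_{P/I}(j, d). -/
open MvPolynomial Finset

/-- dim_K of the degree-`d` homogeneous component of `P/I`. -/
noncomputable def quotDim (K : Type) [Field K] {n : ℕ}
    (I : Ideal (MvPolynomial (Fin n) K)) (d : ℕ) : ℕ :=
  Module.finrank K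
    ((MvPolynomial.homogeneousSubmodule (Fin n) K d).map
      (Ideal.Quotient.mkₐ K I).toLinearMap)

/-- `I + (L_1, …, L_m)` where `L_k = ∑ a, c k a • x_a`. -/
noncomputable def sectionIdeal {K : Type} [Field K] {n m : ℕ}
    (I : Ideal (MvPolynomial (Fin n) K)) (c : Fin m → Fin n → K) :
    Ideal (MvPolynomial (Fin n) K) :=
  I ⊔ Ideal.span (Set.range fun k : Fin m => ∑ a : Fin n, MvPolynomial.C (c k a) * MvPolynomial.X a)

/-- A property `Q` of `m`-tuples of coefficient vectors of linear forms holds *generically*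
if it holds whenever some fixed nonzero polynomial in the coefficients does not vanish
(i.e. on a nonempty Zariski-open set of tuples). -/
def Generically (K : Type) [Field K] (m n : ℕ) (Q : (Fin m → Fin n → K) → Prop) : Prop :=
  ∃ F : MvPolynomial (Fin m × Fin n) K, F ≠ 0 ∧
    ∀ c : Fin m → Fin n → K, MvPolynomial.eval (fun p => c p.1 p.2) F ≠ 0 → Q c

/-- `M` is the sectional matrix of `P/I`:
`M i d = dim_K (P/(I + (L_1,…,L_{n-i})))_d` for generic linear forms `L_1, …, L_{n-i}`. -/
def IsSectionalMatrix {K : Type} [Field K] {n : ℕ}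
    (I : Ideal (MvPolynomial (Fin n) K)) (M : ℕ → ℕ → ℕ) : Prop :=
  ∀ i ∈ Finset.Icc 1 n, ∀ d : ℕ,
    Generically K (n - i) n fun c => quotDim K (sectionIdeal I c) d = M i d

/-- An ideal of `MvPolynomial` is homogeneous (w.r.t. the standard grading). -/
def IsHomogeneousIdeal {K : Type} [Field K] {n : ℕ}
    (I : Ideal (MvPolynomial (Fin n) K)) : Prop :=
  ∀ f ∈ I, ∀ d : ℕ, MvPolynomial.homogeneousComponent d f ∈ I

/-- The truncation `⟨I_{≤δ}⟩`: the ideal generated by all homogeneous elements of `I`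
of degree at most `δ`. -/
noncomputable def truncation {K : Type} [Field K] {n : ℕ}
    (I : Ideal (MvPolynomial (Fin n) K)) (δ : ℕ) : Ideal (MvPolynomial (Fin n) K) :=
  Ideal.span { f | f ∈ I ∧ ∃ e ≤ δ, f.IsHomogeneous e }

/-- `I` is generated in degrees `≤ δ`. -/
def GeneratedInDegreesLE {K : Type} [Field K] {n : ℕ}
    (I : Ideal (MvPolynomial (Fin n) K)) (δ : ℕ) : Prop :=
  I = truncation I δ

/-- Change of coordinates by the matrix `g` : the algebra endomorphism `x_j ↦ ∑ a, g a j • x_a`. -/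
noncomputable def changeCoords {K : Type} [Field K] {n : ℕ} (g : Matrix (Fin n) (Fin n) K) :
    MvPolynomial (Fin n) K →ₐ[K] MvPolynomial (Fin n) K :=
  MvPolynomial.aeval fun j => ∑ a : Fin n, MvPolynomial.C (g a j) * MvPolynomial.X a

/-- The DegRevLex order (with `x_1 > x_2 > … > x_n`) on exponent vectors: `u < v` iff
`deg u < deg v`, or the degrees agree and the last index where they differ has `u` bigger. -/
def DegRevLexLT {n : ℕ} (u v : Fin n →₀ ℕ) : Prop :=
  u.degree < v.degree ∨
    (u.degree = v.degree ∧ ∃ a : Fin n, v a < u a ∧ ∀ b : Fin n, a < b → u b = v b)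

/-- `u` is the DegRevLex-leading exponent of the polynomial `f`. -/
def IsLeadingExponent {K : Type} [Field K] {n : ℕ}
    (f : MvPolynomial (Fin n) K) (u : Fin n →₀ ℕ) : Prop :=
  u ∈ f.support ∧ ∀ v ∈ f.support, v ≠ u → DegRevLexLT v u

/-- The DegRevLex leading-term ideal of `I`. -/
noncomputable def ltIdeal {K : Type} [Field K] {n : ℕ}
    (I : Ideal (MvPolynomial (Fin n) K)) : Ideal (MvPolynomial (Fin n) K) :=
  Ideal.span { m | ∃ f ∈ I, ∃ u : Fin n →₀ ℕ,
    IsLeadingExponent f u ∧ m = MvPolynomial.monomial u (1 : K) }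

/-- `J` is a monomial ideal. -/
def IsMonomialIdeal {K : Type} [Field K] {n : ℕ}
    (J : Ideal (MvPolynomial (Fin n) K)) : Prop :=
  ∃ S : Set (Fin n →₀ ℕ), J = Ideal.span ((fun u => MvPolynomial.monomial u (1 : K)) '' S)

/-- `J` is strongly stable: for every monomial `t ∈ J` and every `i < j` with `x_j ∣ t`,
the monomial `x_i · t / x_j` is in `J`. -/
def IsStronglyStable {K : Type} [Field K] {n : ℕ}
    (J : Ideal (MvPolynomial (Fin n) K)) : Prop :=
  ∀ u : Fin n →₀ ℕ, MvPolynomial.monomial u (1 : K) ∈ J →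
    ∀ i j : Fin n, i < j → u j ≠ 0 →
      MvPolynomial.monomial (u + Finsupp.single i 1 - Finsupp.single j 1) (1 : K) ∈ J

/-- `J` is the generic initial ideal `rgin(I)` of `I` with respect to DegRevLex:
a strongly stable monomial ideal which is the DegRevLex leading term ideal of `g(I)`
for all `g` in a nonempty Zariski-open subset of `GL_n(K)`. -/
def IsRgin {K : Type} [Field K] {n : ℕ}
    (I J : Ideal (MvPolynomial (Fin n) K)) : Prop :=
  IsMonomialIdeal J ∧ IsStronglyStable J ∧
    ∃ G : MvPolynomial (Fin n × Fin n) K, G ≠ 0 ∧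
      ∀ g : Matrix (Fin n) (Fin n) K, g.det ≠ 0 →
        MvPolynomial.eval (fun p => g p.1 p.2) G ≠ 0 →
          ltIdeal (I.map (changeCoords g)) = J

/-- The monomial `x^u` is a minimal (monomial) generator of the monomial ideal `J`. -/
def IsMinimalGen {K : Type} [Field K] {n : ℕ}
    (J : Ideal (MvPolynomial (Fin n) K)) (u : Fin n →₀ ℕ) : Prop :=
  MvPolynomial.monomial u (1 : K) ∈ J ∧
    ∀ a ∈ u.support, MvPolynomial.monomial (u - Finsupp.single a 1) (1 : K) ∉ J

/-- The exponent vector `u` involves only the first `i` variables `x_1, …, x_i`. -/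
def InFirstVars {n : ℕ} (i : ℕ) (u : Fin n →₀ ℕ) : Prop :=
  ∀ a ∈ u.support, (a : ℕ) < i

/-- `c` (on indices `j, j+1, …, d`) is the `d`-binomial expansion of `h`:
`h = C(c d, d) + C(c (d-1), d-1) + … + C(c j, j)` with `c d > c (d-1) > … > c j ≥ j ≥ 1`. -/
def IsBinomialExpansion (h d j : ℕ) (c : ℕ → ℕ) : Prop :=
  1 ≤ j ∧ j ≤ d ∧ j ≤ c j ∧ (∀ t, j ≤ t → t < d → c t < c (t + 1)) ∧
    h = ∑ t ∈ Finset.Icc j d, Nat.choose (c t) t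

/-- `P/J` has multiplicity (degree) `e`: writing the Hilbert series of `P/J` in reduced
form `h(t)/(1-t)^D` with `h(1) ≠ 0`, we have `e = h(1)`. -/
def HasMultiplicity (K : Type) [Field K] {n : ℕ}
    (J : Ideal (MvPolynomial (Fin n) K)) (e : ℕ) : Prop :=
  ∃ (D : ℕ) (h : Polynomial ℤ),
    (PowerSeries.mk fun d => (quotDim K J d : ℤ)) * (1 - PowerSeries.X) ^ D =
      (h : PowerSeries ℤ) ∧
    Polynomial.eval 1 h ≠ 0 ∧ (e : ℤ) = Polynomial.eval 1 h

/-- `F` is a GCD of the (homogeneous) ideal `J`, of degree `k`: `F` is a form of degree `k`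
with `J ⊆ (F)`, and no form of larger degree has this property. -/
def IsGCDOfDegree {K : Type} [Field K] {n : ℕ}
    (J : Ideal (MvPolynomial (Fin n) K)) (F : MvPolynomial (Fin n) K) (k : ℕ) : Prop :=
  F.IsHomogeneous k ∧ J ≤ Ideal.span {F} ∧
    ∀ (k' : ℕ) (G : MvPolynomial (Fin n) K),
      G.IsHomogeneous k' → J ≤ Ideal.span {G} → k' ≤ k

/-- `I` is saturated: `(I : m) = I`, where `m = (x_1, …, x_n)`. -/
def IsSaturatedIdeal {K : Type} [Field K] {n : ℕ}
    (I : Ideal (MvPolynomial (Fin n) K)) : Prop :=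
  Submodule.colon I (Ideal.span (Set.range (MvPolynomial.X : Fin n → MvPolynomial (Fin n) K))) = I

/-- The explicit polynomial `p_i(x) = Σ_{j=1}^{i} C(i−j+x−δ−1, i−j) · M(j,δ)`, where
`C(a, m)` is the polynomial binomial coefficient `a(a-1)⋯(a-m+1)/m!`. -/
noncomputable def secHilbPoly (i δ : ℕ) (M : ℕ → ℕ → ℕ) : Polynomial ℚ :=
  ∑ j ∈ Finset.Icc 1 i, (M j δ : ℚ) •
    ((Nat.factorial (i - j) : ℚ)⁻¹ •
      ∏ t ∈ Finset.range (i - j),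
        (Polynomial.X + Polynomial.C ((i : ℚ) - j - δ - 1 - t)))


section Aux

instance hsFD (K : Type) [Field K] (n d : ℕ) :
    FiniteDimensional K (homogeneousSubmodule (Fin n) K d) := by
  have h : homogeneousSubmodule (Fin n) K d ≤ restrictTotalDegree (Fin n) K d := by
    intro p hp
    rw [mem_restrictTotalDegree]
    exact ((mem_homogeneousSubmodule _ _).mp hp).totalDegree_le
  exact Submodule.finiteDimensional_of_le h

theorem hc_mul (K : Type) [Field K] (n d : ℕ) (p L : MvPolynomial (Fin n) K)
    (hL : L.IsHomogeneous 1) :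
    homogeneousComponent (d+1) (p * L) = homogeneousComponent d p * L := by
  conv_lhs => rw [← sum_homogeneousComponent p, Finset.sum_mul, map_sum]
  have key : ∀ e : ℕ, homogeneousComponent (d+1) (homogeneousComponent e p * L)
      = if d = e then homogeneousComponent e p * L else 0 := by
    intro e
    have h1 : (homogeneousComponent e p * L) ∈ homogeneousSubmodule (Fin n) K (e+1) := by
      rw [mem_homogeneousSubmodule]
      exact (homogeneousComponent_isHomogeneous e p).mul hL
    rw [homogeneousComponent_of_mem h1]
    congr 1
    simp [Nat.succ_inj]
  simp_rw [key]
  rw [Finset.sum_ite_eq (Finset.range (p.totalDegree + 1)) d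
    (fun e => homogeneousComponent e p * L)]
  split_ifs with h
  · rfl
  · rw [homogeneousComponent_eq_zero, zero_mul]
    simpa using h

set_option maxHeartbeats 1000000 in
theorem stepA {K : Type} [Field K] {n : ℕ} (J : Ideal (MvPolynomial (Fin n) K))
    (hJ : IsHomogeneousIdeal J) (L : MvPolynomial (Fin n) K) (hL : L.IsHomogeneous 1)
    (d : ℕ) :
    quotDim K J (d+1) ≤ quotDim K J d + quotDim K (J ⊔ Ideal.span {L}) (d+1) := by
  classical
  set J' := J ⊔ Ideal.span {L} with hJ'
  set q := (Ideal.Quotient.mkₐ K J).toLinearMap with hq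
  set q' := (Ideal.Quotient.mkₐ K J').toLinearMap with hq'
  set V := homogeneousSubmodule (Fin n) K d with hV
  set W := homogeneousSubmodule (Fin n) K (d+1) with hW
  have hle : J ≤ J' := le_sup_left
  let ρalg := Ideal.quotientMapₐ J' (AlgHom.id K _) (by simpa using hle)
  let ρ : (MvPolynomial (Fin n) K ⧸ J) →ₗ[K] (MvPolynomial (Fin n) K ⧸ J') := ρalg.toLinearMap
  have hfac : ρ ∘ₗ q = q' := by
    ext p
    rfl
  let μ : (MvPolynomial (Fin n) K ⧸ J) →ₗ[K] (MvPolynomial (Fin n) K ⧸ J) :=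
    LinearMap.mulLeft K (Ideal.Quotient.mkₐ K J L)
  haveI : FiniteDimensional K (W.map q) := Module.Finite.map _ _
  let ρ' : (W.map q) →ₗ[K] (MvPolynomial (Fin n) K ⧸ J') := ρ ∘ₗ (W.map q).subtype
  have hrank := LinearMap.finrank_range_add_finrank_ker ρ'
  have hrange : LinearMap.range ρ' = W.map q' := by
    rw [LinearMap.range_comp, Submodule.range_subtype, ← Submodule.map_comp, hfac]
  have hker : (LinearMap.ker ρ').map (W.map q).subtype ≤ (V.map q).map μ := by
    rintro x ⟨y, hyker, rfl⟩
    obtain ⟨f, hfW, hf⟩ := y.2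
    have hρy : ρ (y : MvPolynomial (Fin n) K ⧸ J) = 0 := hyker
    have hker0 : q' f = 0 := by
      rw [← hfac, LinearMap.comp_apply, hf, hρy]
    have hfJ' : f ∈ J' := by
      rwa [← Ideal.Quotient.eq_zero_iff_mem]
    rw [hJ'] at hfJ'
    obtain ⟨a, haJ, b, hb, hab⟩ := Submodule.mem_sup.mp hfJ'
    obtain ⟨p, rfl⟩ := Ideal.mem_span_singleton'.mp hb
    have hfcomp : f = homogeneousComponent (d+1) f := by
      rw [homogeneousComponent_of_mem hfW, if_pos rfl]
    have hsplit : f = homogeneousComponent (d+1) a + homogeneousComponent d p * L := by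
      conv_lhs => rw [hfcomp, ← hab]
      rw [map_add, hc_mul K n d p L hL]
    refine ⟨q (homogeneousComponent d p),
      ⟨homogeneousComponent d p, homogeneousComponent_mem d p, rfl⟩, ?_⟩
    have haJ2 : homogeneousComponent (d+1) a ∈ J := hJ a haJ (d+1)
    have hqf : q f = μ (q (homogeneousComponent d p)) := by
      conv_lhs => rw [hsplit]
      show Ideal.Quotient.mkₐ K J _ = Ideal.Quotient.mkₐ K J L * Ideal.Quotient.mkₐ K J _
      rw [map_add, map_mul]
      simp only [Ideal.Quotient.mkₐ_eq_mk]
      rw [(Ideal.Quotient.eq_zero_iff_mem).mpr haJ2]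
      ring
    show μ (q (homogeneousComponent d p)) = ((W.map q).subtype y : MvPolynomial (Fin n) K ⧸ J)
    rw [← hqf]
    exact hf
  have h2 : Module.finrank K (LinearMap.range ρ') = quotDim K J' (d+1) := by
    rw [hrange]; rfl
  have h3 : Module.finrank K (LinearMap.ker ρ') ≤ quotDim K J d := by
    have e := (Submodule.equivMapOfInjective (W.map q).subtype
      (Submodule.injective_subtype _) (LinearMap.ker ρ')).finrank_eq
    rw [e]
    haveI : FiniteDimensional K (V.map q) := Module.Finite.map _ _
    haveI : FiniteDimensional K ((V.map q).map μ) := Module.Finite.map _ _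
    calc Module.finrank K ((LinearMap.ker ρ').map (W.map q).subtype)
        ≤ Module.finrank K ((V.map q).map μ) := Submodule.finrank_mono hker
      _ ≤ Module.finrank K (V.map q) := Submodule.finrank_map_le μ (V.map q)
  have h1 : quotDim K J (d+1) = Module.finrank K (W.map q) := rfl
  omega

theorem homIdeal_sup {K : Type} [Field K] {n m : ℕ} (I : Ideal (MvPolynomial (Fin n) K))
    (hI : IsHomogeneousIdeal I) (L : Fin m → MvPolynomial (Fin n) K)
    (hL : ∀ k, (L k).IsHomogeneous 1) :
    IsHomogeneousIdeal (I ⊔ Ideal.span (Set.range L)) := by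
  intro f hf d
  obtain ⟨a, haI, b, hb, rfl⟩ := Submodule.mem_sup.mp hf
  obtain ⟨p, rfl⟩ := Ideal.mem_span_range_iff_exists_fun.mp hb
  rw [map_add]
  refine Submodule.add_mem_sup (hI a haI d) ?_
  rw [map_sum]
  refine Ideal.sum_mem _ fun k _ => ?_
  cases d with
  | zero =>
    rw [homogeneousComponent_zero]
    have : coeff 0 (p k * L k) = 0 := by
      have h1 : constantCoeff (p k * L k) = constantCoeff (p k) * constantCoeff (L k) :=
        map_mul _ _ _
      have h2 : constantCoeff (L k) = 0 := (hL k).coeff_eq_zero (by simp [Finsupp.degree])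
      simpa [constantCoeff_eq, h2] using h1
    rw [this, map_zero]
    exact Ideal.zero_mem _
  | succ d =>
    rw [hc_mul K n d (p k) (L k) (hL k)]
    exact Ideal.mul_mem_left _ _ (Ideal.subset_span ⟨k, rfl⟩)

theorem quotDim_eq_zero_top {K : Type} [Field K] {n : ℕ} (J : Ideal (MvPolynomial (Fin n) K))
    (hX : Ideal.span (Set.range (X : Fin n → MvPolynomial (Fin n) K)) ≤ J) (d : ℕ) :
    quotDim K J (d+1) = 0 := by
  have : (homogeneousSubmodule (Fin n) K (d+1)).map (Ideal.Quotient.mkₐ K J).toLinearMap = ⊥ := by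
    rw [Submodule.eq_bot_iff]
    rintro x ⟨f, hfW, rfl⟩
    have hf : f ∈ Ideal.span (Set.range (X : Fin n → MvPolynomial (Fin n) K)) := by
      rw [show Set.range (X : Fin n → MvPolynomial (Fin n) K) = X '' Set.univ by simp]
      rw [mem_ideal_span_X_image]
      intro m hm
      have hdeg : m.degree = d + 1 := by
        rw [Finsupp.degree_eq_weight_one]
        exact hfW (mem_support_iff.mp hm)
      have : m ≠ 0 := by
        intro h
        rw [h] at hdeg
        simp [Finsupp.degree] at hdeg
      obtain ⟨i, hi⟩ := Finsupp.ne_iff.mp this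
      exact ⟨i, Set.mem_univ i, by simpa using hi⟩
    have hfJ : f ∈ J := hX hf
    exact (Ideal.Quotient.eq_zero_iff_mem).mpr hfJ
  rw [quotDim, this, finrank_bot]

theorem X_mem_span_linForms {K : Type} [Field K] {n : ℕ} (c : Fin n → Fin n → K)
    (hdet : (Matrix.of c).det ≠ 0) (a : Fin n) :
    X a ∈ Ideal.span (Set.range fun k : Fin n => ∑ b : Fin n, C (c k b) * X b) := by
  set A := Matrix.of c with hA
  set B := A⁻¹ with hB
  have hBA : B * A = 1 := Matrix.nonsing_inv_mul A (isUnit_iff_ne_zero.mpr hdet)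
  have key : (X a : MvPolynomial (Fin n) K) = ∑ k, C (B a k) * ∑ b, C (c k b) * X b := by
    have h1 : ∑ k, C (B a k) * ∑ b, C (c k b) * (X b : MvPolynomial (Fin n) K)
        = ∑ b, C ((B * A) a b) * X b := by
      simp_rw [Finset.mul_sum, ← mul_assoc, ← C_mul]
      rw [Finset.sum_comm]
      simp_rw [← Finset.sum_mul, ← map_sum, Matrix.mul_apply]
      rfl
    rw [h1, hBA]
    simp [Matrix.one_apply, apply_ite C, ite_mul]
  rw [key]
  exact Ideal.sum_mem _ fun k _ => Ideal.mul_mem_left _ _ (Ideal.subset_span ⟨k, rfl⟩)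

theorem rename_ne_zero {σ τ : Type*} {K : Type} [Field K] (f : σ → τ)
    (hf : Function.Injective f) {p : MvPolynomial σ K} (hp : p ≠ 0) :
    rename f p ≠ 0 := by
  intro h
  exact hp (MvPolynomial.rename_injective f hf (by simpa using h))

end Aux

/-- For a homogeneous ideal `I` in `K[x_1,…,x_n]` (`char K = 0`),
`M_{P/I}(i, d+1) ≤ Σ_{j=1}^{i} M_{P/I}(j, d)` for all `i ∈ {1,…,n}` and `d ∈ ℕ`. -/
theorem sectionalMatrix_growth_le_sum
    {K : Type} [Field K] [CharZero K] {n : ℕ}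
    (I : Ideal (MvPolynomial (Fin n) K)) (hI : IsHomogeneousIdeal I)
    (M : ℕ → ℕ → ℕ) (hM : IsSectionalMatrix I M) :
    ∀ i ∈ Finset.Icc 1 n, ∀ d : ℕ,
      M i (d + 1) ≤ ∑ j ∈ Finset.Icc 1 i, M j d := by
  intro i hi d
  classical
  rw [Finset.mem_Icc] at hi
  obtain ⟨hi1, hin⟩ := hi
  have hin' : i ∈ Finset.Icc 1 n := Finset.mem_Icc.mpr ⟨hi1, hin⟩
  have hmemn : ∀ j ∈ Finset.Icc 1 i, j ∈ Finset.Icc 1 n := by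
    intro j hj
    rw [Finset.mem_Icc] at hj ⊢
    omega
  unfold IsSectionalMatrix Generically at hM
  choose F hFne hFq using hM
  -- determinant polynomial
  set detP : MvPolynomial (Fin n × Fin n) K :=
    (Matrix.of fun p q : Fin n => (X (p,q) : MvPolynomial (Fin n × Fin n) K)).det with hdetP
  have hdetPne : detP ≠ 0 := by
    intro h
    have h1 : MvPolynomial.eval
        (fun p : Fin n × Fin n => if p.1 = p.2 then (1:K) else 0) detP = 1 := by
      rw [hdetP, RingHom.map_det, RingHom.mapMatrix_apply]
      have heq : ((Matrix.of fun p q : Fin n => (X (p,q) : MvPolynomial (Fin n × Fin n) K)).map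
          (MvPolynomial.eval fun p : Fin n × Fin n => if p.1 = p.2 then (1:K) else 0))
          = (1 : Matrix (Fin n) (Fin n) K) := by
        ext p q
        simp [Matrix.one_apply]
      rw [heq, Matrix.det_one]
    rw [h] at h1
    simp at h1
  -- embeddings
  let emb : ∀ j : ℕ, Fin (n - j) × Fin n → Fin n × Fin n :=
    fun j p => (Fin.castLE (Nat.sub_le n j) p.1, p.2)
  have hembinj : ∀ j, Function.Injective (emb j) := by
    intro j p q h
    have h1 : Fin.castLE (Nat.sub_le n j) p.1 = Fin.castLE (Nat.sub_le n j) q.1 :=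
      congrArg Prod.fst h
    have h2 := congrArg Prod.snd h
    exact Prod.ext (Fin.castLE_injective _ h1) h2
  -- combined generic polynomial
  set G : MvPolynomial (Fin n × Fin n) K :=
    detP * rename (emb i) (F i hin' (d+1)) *
      ∏ j ∈ (Finset.Icc 1 i).attach, rename (emb j) (F j (hmemn j j.2) d) with hG
  have hGne : G ≠ 0 := by
    refine mul_ne_zero (mul_ne_zero hdetPne ?_) ?_
    · exact rename_ne_zero _ (hembinj i) (hFne i hin' (d+1))
    · exact Finset.prod_ne_zero_iff.mpr fun j _ =>
        rename_ne_zero _ (hembinj j) (hFne j (hmemn j j.2) d)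
  -- choose a common good point
  have hexx : ∃ x : Fin n × Fin n → K, MvPolynomial.eval x G ≠ 0 := by
    by_contra h
    push_neg at h
    exact hGne (MvPolynomial.funext (q := 0) fun x => by simpa using h x)
  obtain ⟨x, hx⟩ := hexx
  rw [hG, map_mul, map_mul, map_prod] at hx
  have hxdet := left_ne_zero_of_mul (left_ne_zero_of_mul hx)
  have hxF' := right_ne_zero_of_mul (left_ne_zero_of_mul hx)
  have hxprod := right_ne_zero_of_mul hx
  have hxF : ∀ j (hj : j ∈ Finset.Icc 1 i),
      MvPolynomial.eval x (rename (emb j) (F j (hmemn j hj) d)) ≠ 0 := by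
    intro j hj
    exact Finset.prod_ne_zero_iff.mp hxprod ⟨j, hj⟩ (Finset.mem_attach _ _)
  set c : Fin n → Fin n → K := fun k a => x (k,a) with hc
  have hdetc : (Matrix.of c).det ≠ 0 := by
    have heval : MvPolynomial.eval x detP = (Matrix.of c).det := by
      rw [hdetP, RingHom.map_det, RingHom.mapMatrix_apply]
      congr 1
      ext p q
      simp [hc]
    rwa [heval] at hxdet
  -- the chain of ideals
  set r : ℕ → Fin n → K := fun t a => if h : t < n then c ⟨t,h⟩ a else 0 with hr
  set Lrow : ℕ → MvPolynomial (Fin n) K := fun t => ∑ a : Fin n, C (r t a) * X a with hLrow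
  set Jm : ℕ → Ideal (MvPolynomial (Fin n) K) :=
    fun m => I ⊔ Ideal.span (Set.range fun k : Fin m => Lrow (k:ℕ)) with hJm
  have hLhom : ∀ t, (Lrow t).IsHomogeneous 1 := by
    intro t
    rw [← mem_homogeneousSubmodule]
    refine Submodule.sum_mem _ fun a _ => ?_
    rw [C_mul']
    exact Submodule.smul_mem _ _ ((mem_homogeneousSubmodule _ _).mpr (isHomogeneous_X K a))
  have hJhom : ∀ m, IsHomogeneousIdeal (Jm m) :=
    fun m => homIdeal_sup I hI _ (fun k => hLhom _)
  have hmatch : ∀ (m : ℕ) (hm : m ≤ n),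
      Jm m = sectionIdeal I (fun k : Fin m => c (Fin.castLE hm k)) := by
    intro m hm
    have hfe : (fun k : Fin m => Lrow (k:ℕ))
        = (fun k : Fin m => ∑ a : Fin n, C (c (Fin.castLE hm k) a) * X a) := by
      funext k
      refine Finset.sum_congr rfl fun a _ => ?_
      have hk : (k:ℕ) < n := lt_of_lt_of_le k.isLt hm
      have hkk : (⟨(k:ℕ), hk⟩ : Fin n) = Fin.castLE hm k := Fin.ext rfl
      have : r (k:ℕ) a = c (Fin.castLE hm k) a := by
        rw [hr]
        simp only
        rw [dif_pos hk, hkk]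
      rw [this]
    rw [hJm]
    simp only
    rw [hfe, sectionIdeal]
  have hchain : ∀ m : ℕ, Jm (m+1) = Jm m ⊔ Ideal.span {Lrow m} := by
    intro m
    rw [hJm]
    simp only
    rw [sup_assoc]
    congr 1
    rw [← Ideal.span_union]
    congr 1
    ext y
    constructor
    · rintro ⟨k, rfl⟩
      by_cases h : (k:ℕ) < m
      · exact Or.inl ⟨⟨(k:ℕ), h⟩, rfl⟩
      · have hk : (k:ℕ) = m := by omega
        right
        simp [hk]
    · rintro (⟨k, rfl⟩ | h)
      · exact ⟨⟨(k:ℕ), by omega⟩, rfl⟩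
      · rw [Set.mem_singleton_iff] at h
        subst h
        exact ⟨⟨m, by omega⟩, rfl⟩
  have hstep : ∀ m : ℕ,
      quotDim K (Jm m) (d+1) ≤ quotDim K (Jm m) d + quotDim K (Jm (m+1)) (d+1) := by
    intro m
    rw [hchain m]
    exact stepA (Jm m) (hJhom m) (Lrow m) (hLhom m) d
  have hdown : ∀ t m : ℕ, m + t = n →
      quotDim K (Jm m) (d+1) ≤
        (∑ k ∈ Finset.Ico m n, quotDim K (Jm k) d) + quotDim K (Jm n) (d+1) := by
    intro t
    induction t with
    | zero =>
      intro m hm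
      have : m = n := by omega
      subst this
      simp
    | succ t ih =>
      intro m hm
      have h1 := hstep m
      have h2 := ih (m+1) (by omega)
      have h3 : ∑ k ∈ Finset.Ico m n, quotDim K (Jm k) d
          = quotDim K (Jm m) d + ∑ k ∈ Finset.Ico (m+1) n, quotDim K (Jm k) d :=
        Finset.sum_eq_sum_Ico_succ_bot (by omega) _
      omega
  have htop : quotDim K (Jm n) (d+1) = 0 := by
    apply quotDim_eq_zero_top
    rw [Ideal.span_le]
    rintro y ⟨a, rfl⟩
    have h := X_mem_span_linForms c hdetc a
    have heq : (fun k : Fin n => ∑ b : Fin n, C (c k b) * X b)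
        = (fun k : Fin n => Lrow (k:ℕ)) := by
      funext k
      refine Finset.sum_congr rfl fun b _ => ?_
      have hkk : (⟨(k:ℕ), k.isLt⟩ : Fin n) = k := Fin.ext rfl
      have : r (k:ℕ) b = c k b := by
        rw [hr]
        simp only
        rw [dif_pos k.isLt, hkk]
      rw [this]
    rw [heq] at h
    exact Ideal.mem_sup_right h
  -- identify the matrix entries with quotDim's
  have hiq : quotDim K (Jm (n-i)) (d+1) = M i (d+1) := by
    rw [hmatch (n-i) (Nat.sub_le n i)]
    apply hFq i hin' (d+1)
    rwa [eval_rename] at hxF'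
  have hjq : ∀ j ∈ Finset.Icc 1 i, quotDim K (Jm (n-j)) d = M j d := by
    intro j hj
    rw [hmatch (n-j) (Nat.sub_le n j)]
    apply hFq j (hmemn j hj) d
    have := hxF j hj
    rwa [eval_rename] at this
  have hsum : ∑ j ∈ Finset.Icc 1 i, M j d = ∑ k ∈ Finset.Ico (n-i) n, quotDim K (Jm k) d := by
    rw [show ∑ j ∈ Finset.Icc 1 i, M j d
        = ∑ j ∈ Finset.Icc 1 i, quotDim K (Jm (n-j)) d from
      Finset.sum_congr rfl fun j hj => (hjq j hj).symm]
    refine Finset.sum_nbij' (fun j => n - j) (fun k => n - k) ?_ ?_ ?_ ?_ ?_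
    · intro j hj
      simp only [Finset.mem_Icc] at hj
      simp only [Finset.mem_Ico]
      omega
    · intro k hk
      simp only [Finset.mem_Ico] at hk
      simp only [Finset.mem_Icc]
      omega
    · intro j hj
      simp only [Finset.mem_Icc] at hj
      show n - (n - j) = j
      omega
    · intro k hk
      simp only [Finset.mem_Ico] at hk
      show n - (n - k) = k
      omega
    · intro j hj
      rfl
  have hfin := hdown (n - (n - i)) (n - i) (by omega)
  rw [htop, add_zero] at hfin
  rw [← hiq, hsum]
  exact hfin
end

section
/- Let I be a saturated homogeneous ideal in P = K[x_1,…,x_n], where K is a field of characteristic 0. Then M_{P/I} has n-maximal growth in degree δ if and only if it has (n−1)-maximal growth in degree δ. -/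
set_option maxHeartbeats 1000000


open MvPolynomial Finset

namespace SatProof

variable {K : Type} [Field K] {n : ℕ}

/-- The linear form with coefficient vector `c`. -/
noncomputable def lin (c : Fin n → K) : MvPolynomial (Fin n) K :=
  ∑ a : Fin n, MvPolynomial.C (c a) * MvPolynomial.X a

/-- `lin` as a linear map. -/
noncomputable def linMap : (Fin n → K) →ₗ[K] MvPolynomial (Fin n) K where
  toFun := lin
  map_add' c d := by
    simp [lin, map_add, add_mul, Finset.sum_add_distrib]
  map_smul' k c := by
    simp only [lin, RingHom.id_apply, Finset.smul_sum, Pi.smul_apply, smul_eq_mul, map_mul]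
    refine Finset.sum_congr rfl fun a _ => ?_
    rw [MvPolynomial.smul_eq_C_mul, mul_assoc]

lemma linMap_ite (a : Fin n) :
    linMap (fun j => if a = j then (1 : K) else 0) = MvPolynomial.X a := by
  show lin (fun j => if a = j then (1 : K) else 0) = MvPolynomial.X a
  simp only [lin]
  rw [Finset.sum_eq_single a]
  · simp
  · intro b _ hb
    simp [Ne.symm hb]
  · simp

variable (I : Ideal (MvPolynomial (Fin n) K))

lemma satA (hsat : Submodule.colon I (Ideal.span (Set.range (MvPolynomial.X : Fin n → MvPolynomial (Fin n) K))) = I)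
    (f : MvPolynomial (Fin n) K) (hf : ∀ a : Fin n, MvPolynomial.X a * f ∈ I) : f ∈ I := by
  rw [← hsat, Submodule.mem_colon]
  intro p hp
  induction hp using Submodule.span_induction with
  | mem x hx =>
    obtain ⟨a, rfl⟩ := hx
    rw [smul_eq_mul, mul_comm]
    exact hf a
  | zero => simp
  | add x y _ _ hx hy => rw [smul_add]; exact I.add_mem hx hy
  | smul r x _ hx =>
    rw [smul_eq_mul, smul_eq_mul, mul_left_comm]
    exact I.mul_mem_left r hx

lemma prodX_mem : ∀ (k : ℕ) (u : Fin k → Fin n),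
    (∏ i, MvPolynomial.X (u i) : MvPolynomial (Fin n) K) ∈
      (Ideal.span (Set.range (MvPolynomial.X : Fin n → MvPolynomial (Fin n) K))) ^ k := by
  intro k
  induction k with
  | zero => intro u; simp
  | succ k ih =>
    intro u
    rw [Fin.prod_univ_succ, pow_succ']
    exact Ideal.mul_mem_mul (Ideal.subset_span ⟨u 0, rfl⟩) (ih _)

lemma satB (hsat : Submodule.colon I (Ideal.span (Set.range (MvPolynomial.X : Fin n → MvPolynomial (Fin n) K))) = I) :
    ∀ (k : ℕ) (g : MvPolynomial (Fin n) K),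
      (∀ u : Fin k → Fin n, (∏ i, MvPolynomial.X (u i)) * g ∈ I) → g ∈ I := by
  intro k
  induction k with
  | zero =>
    intro g hg
    simpa using hg (fun i => i.elim0)
  | succ k ih =>
    intro g hg
    refine ih g fun u => ?_
    refine satA I hsat _ fun a => ?_
    have := hg (Fin.cons a u)
    rwa [Fin.prod_univ_succ, Fin.cons_zero, mul_assoc] at this

lemma primary_avoid [DecidableEq (Ideal (MvPolynomial (Fin n) K))]
    (hsat : Submodule.colon I (Ideal.span (Set.range (MvPolynomial.X : Fin n → MvPolynomial (Fin n) K))) = I)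
    {t : Finset (Ideal (MvPolynomial (Fin n) K))}
    (ht : t.inf id = I) (htp : ∀ ⦃J⦄, J ∈ t → J.IsPrimary)
    (hmin : ∀ ⦃J⦄, J ∈ t → ¬ (t.erase J).inf id ≤ J)
    {Q : Ideal (MvPolynomial (Fin n) K)} (hQ : Q ∈ t) :
    ∃ a : Fin n, MvPolynomial.X a ∉ Q.radical := by
  by_contra h
  push_neg at h
  obtain ⟨g, hgJ, hgQ⟩ := SetLike.not_le_iff_exists.mp (hmin hQ)
  have hm : Ideal.span (Set.range (MvPolynomial.X : Fin n → MvPolynomial (Fin n) K)) ≤ Q.radical :=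
    Ideal.span_le.mpr (by rintro _ ⟨a, rfl⟩; exact h a)
  obtain ⟨N, hN⟩ := Ideal.exists_radical_pow_le_of_fg Q (IsNoetherian.noetherian _)
  have hmN : (Ideal.span (Set.range (MvPolynomial.X : Fin n → MvPolynomial (Fin n) K))) ^ N ≤ Q :=
    le_trans (Ideal.pow_right_mono hm N) hN
  have hgI : g ∈ I := by
    refine satB I hsat N g fun u => ?_
    rw [← ht, Submodule.mem_finsetInf]
    intro Q' hQ'
    by_cases hQQ : Q' = Q
    · subst hQQ
      exact Q'.mul_mem_right g (hmN (prodX_mem N u))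
    · exact Q'.mul_mem_left _ (Submodule.mem_finsetInf.mp hgJ Q' (Finset.mem_erase.mpr ⟨hQQ, hQ'⟩))
  exact hgQ ((ht ▸ Finset.inf_le hQ) hgI)

lemma avoid_poly (Q : Ideal (MvPolynomial (Fin n) K)) (ha : ∃ a : Fin n, MvPolynomial.X a ∉ Q.radical) :
    ∃ p : MvPolynomial (Fin 1 × Fin n) K, p ≠ 0 ∧
      ∀ c : Fin 1 → Fin n → K, MvPolynomial.eval (fun pr => c pr.1 pr.2) p ≠ 0 →
        lin (c 0) ∉ Q.radical := by
  classical
  obtain ⟨a, ha⟩ := ha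
  set T : Submodule K (Fin n → K) :=
    Submodule.comap linMap (Submodule.restrictScalars K Q.radical) with hT
  have hvT : (fun j => if a = j then (1 : K) else 0) ∉ T := by
    simp only [hT, Submodule.mem_comap, linMap_ite, Submodule.restrictScalars_mem]
    exact ha
  have hmk : T.mkQ (fun j => if a = j then (1 : K) else 0) ≠ 0 := by
    simpa [Submodule.Quotient.mk_eq_zero] using hvT
  obtain ⟨ψ, hψ⟩ : ∃ ψ : Module.Dual K ((Fin n → K) ⧸ T),
      ψ (T.mkQ (fun j => if a = j then (1 : K) else 0)) ≠ 0 := by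
    by_contra hco
    push_neg at hco
    exact hmk ((Module.forall_dual_apply_eq_zero_iff K _).mp hco)
  set φ : Module.Dual K (Fin n → K) := ψ.comp T.mkQ with hφdef
  set p : MvPolynomial (Fin 1 × Fin n) K :=
    ∑ b : Fin n, MvPolynomial.C (φ (fun j => if b = j then (1 : K) else 0)) *
      MvPolynomial.X ((0 : Fin 1), b) with hp
  have keyeval : ∀ c : Fin 1 → Fin n → K,
      MvPolynomial.eval (fun pr => c pr.1 pr.2) p = φ (c 0) := by
    intro c
    rw [hp, map_sum]
    simp only [map_mul, eval_C, eval_X]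
    rw [LinearMap.pi_apply_eq_sum_univ φ (c 0)]
    refine Finset.sum_congr rfl fun b _ => ?_
    rw [smul_eq_mul, mul_comm]
  refine ⟨p, ?_, ?_⟩
  · intro h0
    have h1 := keyeval (fun _ => fun j => if a = j then (1 : K) else 0)
    rw [h0, map_zero] at h1
    exact hψ (by rw [hφdef] at h1; exact h1.symm)
  · intro c hc
    rw [keyeval c] at hc
    intro hmem
    apply hc
    have hcT : c 0 ∈ T := by
      rw [hT]
      exact Submodule.mem_comap.mpr hmem
    have h0 : T.mkQ (c 0) = 0 := (Submodule.Quotient.mk_eq_zero T).mpr hcT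
    rw [hφdef, LinearMap.comp_apply, h0, map_zero]

lemma nzd_poly
    (hsat : Submodule.colon I (Ideal.span (Set.range (MvPolynomial.X : Fin n → MvPolynomial (Fin n) K))) = I) :
    ∃ G : MvPolynomial (Fin 1 × Fin n) K, G ≠ 0 ∧
      ∀ c : Fin 1 → Fin n → K, MvPolynomial.eval (fun pr => c pr.1 pr.2) G ≠ 0 →
        ∀ f, lin (c 0) * f ∈ I → f ∈ I := by
  classical
  obtain ⟨t, ht, htp, -, hmin⟩ :=
    Ideal.IsLasker.minimal (Ideal.isLasker (MvPolynomial (Fin n) K) (MvPolynomial (Fin n) K)) I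
  choose p hp0 hpspec using fun (Q : {Q // Q ∈ t}) =>
    avoid_poly Q.1 (primary_avoid I hsat ht htp hmin Q.2)
  refine ⟨∏ Q ∈ t.attach, p Q, ?_, ?_⟩
  · rw [Finset.prod_ne_zero_iff]
    exact fun Q _ => hp0 Q
  · intro c hc f hf
    have hfac : ∀ Q : {Q // Q ∈ t},
        MvPolynomial.eval (fun pr => c pr.1 pr.2) (p Q) ≠ 0 := by
      intro Q h0
      apply hc
      rw [map_prod]
      exact Finset.prod_eq_zero (Finset.mem_attach _ Q) h0
    by_contra hfI
    have hex : ∃ Q ∈ t, f ∉ Q := by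
      by_contra hall
      push_neg at hall
      exact hfI (ht ▸ Submodule.mem_finsetInf.mpr fun Q hQ => hall Q hQ)
    obtain ⟨Q, hQt, hfQ⟩ := hex
    have hLrad : lin (c 0) ∉ Ideal.radical Q := hpspec ⟨Q, hQt⟩ c (hfac ⟨Q, hQt⟩)
    have hfQ2 : f * lin (c 0) ∈ Q := by
      have h1 : lin (c 0) * f ∈ Q := (ht ▸ Finset.inf_le hQt) hf
      rwa [mul_comm] at h1
    rcases (Ideal.isPrimary_iff.mp (htp hQt)).2 hfQ2 with h | h
    · exact hfQ h
    · exact hLrad h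



lemma homog_fd (d : ℕ) : FiniteDimensional K (homogeneousSubmodule (Fin n) K d) := by
  have hle : homogeneousSubmodule (Fin n) K d ≤ restrictTotalDegree (Fin n) K d := by
    intro f hf
    rw [mem_restrictTotalDegree]
    exact ((mem_homogeneousSubmodule _ _).mp hf).totalDegree_le
  exact Submodule.finiteDimensional_of_le hle

lemma hc_mul (L : MvPolynomial (Fin n) K) (hL1 : L.IsHomogeneous 1) (δ : ℕ)
    (g : MvPolynomial (Fin n) K) :
    homogeneousComponent (δ + 1) (L * g) = L * homogeneousComponent δ g := by
  conv_lhs => rw [← sum_homogeneousComponent g]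
  rw [Finset.mul_sum, map_sum]
  have hterm : ∀ e : ℕ, homogeneousComponent (δ + 1) (L * homogeneousComponent e g) =
      if e = δ then L * homogeneousComponent δ g else 0 := by
    intro e
    have hmem : L * homogeneousComponent e g ∈ homogeneousSubmodule (Fin n) K (1 + e) :=
      (mem_homogeneousSubmodule _ _).mpr (hL1.mul (homogeneousComponent_isHomogeneous e g))
    rw [homogeneousComponent_of_mem hmem]
    by_cases he : e = δ
    · subst he
      rw [if_pos (by omega), if_pos rfl]
    · rw [if_neg (by omega), if_neg he]
  rw [Finset.sum_congr rfl fun e _ => hterm e]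
  rw [Finset.sum_ite_eq' (Finset.range (g.totalDegree + 1)) δ
    (fun _ => L * homogeneousComponent δ g)]
  split_ifs with h
  · rfl
  · have hlt : g.totalDegree < δ := by
      simp only [Finset.mem_range, not_lt] at h
      omega
    rw [homogeneousComponent_eq_zero δ g hlt, mul_zero]

lemma dim_identity (I : Ideal (MvPolynomial (Fin n) K))
    (hI : ∀ f ∈ I, ∀ d : ℕ, MvPolynomial.homogeneousComponent d f ∈ I)
    (L : MvPolynomial (Fin n) K) (hL1 : L.IsHomogeneous 1)
    (hnzd : ∀ f, L * f ∈ I → f ∈ I) (δ : ℕ) :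
    quotDim K (I ⊔ Ideal.span {L}) (δ + 1) + quotDim K I δ = quotDim K I (δ + 1) := by
  classical
  set J : Ideal (MvPolynomial (Fin n) K) := I ⊔ Ideal.span {L} with hJ
  have hIJ : I ≤ J := le_sup_left
  set π := Ideal.Quotient.mkₐ K I with hπ
  set πJ := Ideal.Quotient.mkₐ K J with hπJ
  have hker0 : ∀ f, πJ f = 0 ↔ f ∈ J := by
    intro f
    rw [hπJ, Ideal.Quotient.mkₐ_eq_mk]
    exact Ideal.Quotient.eq_zero_iff_mem
  set ρ : (MvPolynomial (Fin n) K ⧸ I) →ₐ[K] (MvPolynomial (Fin n) K ⧸ J) :=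
    Ideal.Quotient.liftₐ I πJ (fun a ha => (hker0 a).mpr (hIJ ha)) with hρ
  have hρπ : ∀ f, ρ (π f) = πJ f := by
    intro f
    have h2 := DFunLike.congr_fun (Ideal.Quotient.liftₐ_comp I πJ
      (fun a ha => (hker0 a).mpr (hIJ ha))) f
    simpa [hρ, hπ] using h2
  set V1 := (homogeneousSubmodule (Fin n) K δ).map π.toLinearMap with hV1
  set V2 := (homogeneousSubmodule (Fin n) K (δ + 1)).map π.toLinearMap with hV2
  set W := (homogeneousSubmodule (Fin n) K (δ + 1)).map πJ.toLinearMap with hW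
  haveI := homog_fd (K := K) (n := n) δ
  haveI := homog_fd (K := K) (n := n) (δ + 1)
  haveI : Module.Finite K V1 := Module.Finite.map _ _
  haveI : Module.Finite K V2 := Module.Finite.map _ _
  set mulL : (MvPolynomial (Fin n) K ⧸ I) →ₗ[K] (MvPolynomial (Fin n) K ⧸ I) :=
    LinearMap.mulLeft K (π L) with hmulL
  have hinj : Function.Injective mulL := by
    intro x y hxy
    obtain ⟨f, rfl⟩ := Ideal.Quotient.mkₐ_surjective K I x
    obtain ⟨g, rfl⟩ := Ideal.Quotient.mkₐ_surjective K I y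
    simp only [hmulL, LinearMap.mulLeft_apply, hπ, ← map_mul] at hxy
    have hsub : L * f - L * g ∈ I := by
      simp only [Ideal.Quotient.mkₐ_eq_mk] at hxy
      exact (Ideal.Quotient.mk_eq_mk_iff_sub_mem _ _).mp hxy
    have hfg : f - g ∈ I := hnzd _ (by rwa [mul_sub])
    simp only [hπ, Ideal.Quotient.mkₐ_eq_mk]
    exact (Ideal.Quotient.mk_eq_mk_iff_sub_mem _ _).mpr hfg
  set φ : V2 →ₗ[K] (MvPolynomial (Fin n) K ⧸ J) := ρ.toLinearMap.domRestrict V2 with hφ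
  have hcomp : ρ.toLinearMap ∘ₗ π.toLinearMap = πJ.toLinearMap :=
    LinearMap.ext fun f => hρπ f
  have hrange : LinearMap.range φ = W := by
    rw [hφ, LinearMap.range_domRestrict, hV2, ← Submodule.map_comp, hcomp, hW]
  set S := V1.map mulL with hS
  have hSle : S ≤ V2 := by
    rintro x hx
    obtain ⟨y, hy, rfl⟩ := hx
    obtain ⟨g, hg, rfl⟩ := hy
    refine ⟨L * g, ?_, ?_⟩
    · exact (mem_homogeneousSubmodule _ _).mpr
        (by simpa [Nat.add_comm] using hL1.mul ((mem_homogeneousSubmodule _ _).mp hg))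
    · show π.toLinearMap (L * g) = mulL (π.toLinearMap g)
      simp [hmulL, map_mul, hπ]
  have hkerφ : LinearMap.ker φ = S.comap V2.subtype := by
    ext x
    simp only [LinearMap.mem_ker, hφ, LinearMap.domRestrict_apply, Submodule.mem_comap,
      Submodule.coe_subtype, AlgHom.toLinearMap_apply]
    constructor
    · intro hx0
      obtain ⟨f, hf, hfx⟩ := x.2
      have hfJ : f ∈ J := by
        rw [← hker0, ← hρπ f]
        have : π f = (x : MvPolynomial (Fin n) K ⧸ I) := hfx
        rw [this, hx0]
      obtain ⟨i, hi, s, hs, hfis⟩ := Submodule.mem_sup.mp (hJ ▸ hfJ)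
      obtain ⟨g, hg⟩ := Ideal.mem_span_singleton'.mp hs
      have hcf : homogeneousComponent (δ + 1) f = f := by
        rw [homogeneousComponent_of_mem hf, if_pos rfl]
      have hdecomp : f = homogeneousComponent (δ + 1) i + L * homogeneousComponent δ g := by
        conv_lhs => rw [← hcf, ← hfis, map_add]
        congr 1
        rw [← hg, mul_comm g L]
        exact hc_mul L hL1 δ g
      refine ⟨π.toLinearMap (homogeneousComponent δ g),
        Submodule.mem_map_of_mem ((mem_homogeneousSubmodule _ _).mpr
          (homogeneousComponent_isHomogeneous δ g)), ?_⟩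
      have h1 : π (homogeneousComponent (δ + 1) i) = 0 := by
        rw [hπ, Ideal.Quotient.mkₐ_eq_mk, Ideal.Quotient.eq_zero_iff_mem]
        exact hI i hi (δ + 1)
      have h2 : mulL (π.toLinearMap (homogeneousComponent δ g)) =
          π (L * homogeneousComponent δ g) := by
        simp [hmulL, map_mul, hπ]
      rw [h2, ← hfx]
      show π (L * homogeneousComponent δ g) = π f
      conv_rhs => rw [hdecomp, map_add, h1, zero_add]
    · intro hxS
      obtain ⟨y, hy, hyx⟩ := hxS
      obtain ⟨g, hg, rfl⟩ := hy
      rw [← hyx]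
      have h2 : mulL (π.toLinearMap g) = π (L * g) := by simp [hmulL, map_mul, hπ]
      rw [h2]
      have h3 : ρ (π (L * g)) = πJ (L * g) := hρπ _
      rw [h3, hker0]
      exact Submodule.mem_sup_right (Ideal.mem_span_singleton.mpr ⟨g, rfl⟩)
  have rank_nullity := LinearMap.finrank_range_add_finrank_ker φ
  have h1 : Module.finrank K (LinearMap.range φ) = Module.finrank K W := by rw [hrange]
  have h2 : Module.finrank K (LinearMap.ker φ) = Module.finrank K V1 := by
    rw [hkerφ]
    rw [LinearEquiv.finrank_eq (Submodule.comapSubtypeEquivOfLe hSle)]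
    exact (LinearEquiv.finrank_eq (Submodule.equivMapOfInjective mulL hinj V1)).symm
  have q1 : quotDim K I (δ + 1) = Module.finrank K V2 := rfl
  have q2 : quotDim K I δ = Module.finrank K V1 := rfl
  have q3 : quotDim K J (δ + 1) = Module.finrank K W := rfl
  rw [q3, q2, q1, ← h1, ← h2]
  exact rank_nullity


end SatProof

/-- Let `I` be a saturated homogeneous ideal in `K[x_1,…,x_n]`
(`char K = 0`).  Then `M_{P/I}` has `n`-maximal growth in degree `δ` if and only if it
has `(n−1)`-maximal growth in degree `δ`. -/
theorem saturated_n_maximal_iff_n_sub_one_maximal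
    {K : Type} [Field K] [CharZero K] {n : ℕ} (hn : 2 ≤ n)
    (I : Ideal (MvPolynomial (Fin n) K)) (hI : IsHomogeneousIdeal I)
    (hsat : IsSaturatedIdeal I)
    (M : ℕ → ℕ → ℕ) (hM : IsSectionalMatrix I M) (δ : ℕ) :
    (M n (δ + 1) = ∑ j ∈ Finset.Icc 1 n, M j δ) ↔
    (M (n - 1) (δ + 1) = ∑ j ∈ Finset.Icc 1 (n - 1), M j δ) := by
  classical
  have hMn : ∀ d : ℕ, M n d = quotDim K I d := by
    intro d
    have h := hM n (Finset.mem_Icc.mpr ⟨by omega, le_rfl⟩) d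
    rw [Nat.sub_self] at h
    obtain ⟨F, hF0, hFQ⟩ := h
    have hc : MvPolynomial.eval
        (fun p : Fin 0 × Fin n => (Fin.elim0 : Fin 0 → Fin n → K) p.1 p.2) F ≠ 0 := by
      have hFC : F = MvPolynomial.C (MvPolynomial.constantCoeff F) := by
        exact (MvPolynomial.eq_C_of_isEmpty F)
      rw [hFC, eval_C]
      intro h0
      exact hF0 (by rw [hFC, h0, map_zero])
    have hq := hFQ Fin.elim0 hc
    have hsec0 : sectionIdeal I (Fin.elim0 : Fin 0 → Fin n → K) = I := by
      unfold sectionIdeal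
      rw [Set.range_eq_empty, Ideal.span_empty, sup_bot_eq]
    simp only [hsec0] at hq
    exact hq.symm
  have h1 := hM (n - 1) (Finset.mem_Icc.mpr ⟨by omega, by omega⟩) (δ + 1)
  rw [show n - (n - 1) = 1 from by omega] at h1
  obtain ⟨F1, hF10, hF1⟩ := h1
  obtain ⟨G, hG0, hGspec⟩ := SatProof.nzd_poly I hsat
  have hprod : F1 * G ≠ 0 := mul_ne_zero hF10 hG0
  obtain ⟨x, hx⟩ : ∃ x : Fin 1 × Fin n → K, MvPolynomial.eval x (F1 * G) ≠ 0 := by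
    by_contra hco
    push_neg at hco
    exact hprod (MvPolynomial.funext fun x => by rw [hco x, map_zero])
  set c : Fin 1 → Fin n → K := fun i a => x (i, a) with hcdef
  have hxc : (fun p : Fin 1 × Fin n => c p.1 p.2) = x := by funext p; rfl
  have hev : MvPolynomial.eval (fun p : Fin 1 × Fin n => c p.1 p.2) (F1 * G) ≠ 0 := by
    rw [hxc]; exact hx
  rw [map_mul] at hev
  obtain ⟨hevF1, hevG⟩ := mul_ne_zero_iff.mp hev
  have hE : quotDim K (sectionIdeal I c) (δ + 1) = M (n - 1) (δ + 1) := hF1 c hevF1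
  set L : MvPolynomial (Fin n) K := ∑ a : Fin n, MvPolynomial.C (c 0 a) * MvPolynomial.X a with hL
  have hsec : sectionIdeal I c = I ⊔ Ideal.span {L} := by
    unfold sectionIdeal
    congr 1
    rw [Set.range_unique]
    rw [show (default : Fin 1) = 0 from rfl]
  have hL1 : L.IsHomogeneous 1 := by
    rw [hL]
    exact IsHomogeneous.sum _ _ _ fun a _ => isHomogeneous_C_mul_X _ _
  have hnzd : ∀ f, L * f ∈ I → f ∈ I := fun f hf => hGspec c hevG f hf
  have hid := SatProof.dim_identity I hI L hL1 hnzd δ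
  simp only [hsec] at hE
  have hMn1 : M (n - 1) (δ + 1) + M n δ = M n (δ + 1) := by
    rw [← hE, hMn δ, hMn (δ + 1)]
    exact hid
  have hsum : ∑ j ∈ Finset.Icc 1 n, M j δ = (∑ j ∈ Finset.Icc 1 (n - 1), M j δ) + M n δ := by
    have h := Finset.sum_Icc_succ_top (a := 1) (b := n - 1) (by omega) (fun j => M j δ)
    rw [show n - 1 + 1 = n from by omega] at h
    exact h
  constructor
  · intro h; omega
  · intro h; omega
end
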